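/- Let λ(G) be a temporal graph, where G = (V,E) is a digraph, and let s, v ∈ V be two distinguished vertices. Then the maximum number of pairwise out-disjoint journeys from s to v in λ(G) is equal to the minimum number of node departure times that need to be removed in order to leave no journey from s to v. -/

import Mathlib

section Abstract
variable {α : Type*} [DecidableEq α]
set_option linter.unusedSectionVars false

/-- A walk in the token digraph `E` from `A` to `B`. -/
def AWalk (E : Finset (α × α)) (A B : Finset α) (l : List α) : Prop :=
  (∃ a ∈ A, l.head? = some a) ∧ l.Chain' (fun x y => (x, y) ∈ E) ∧
    (∃ b ∈ B, l.getLast? = some b)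

/-- A separator: a set of tokens meeting every `A`–`B` walk. -/
def ASep (E : Finset (α × α)) (A B S : Finset α) : Prop :=
  ∀ l, AWalk E A B l → ∃ x ∈ S, x ∈ l

lemma AWalk.ne_nil {E : Finset (α × α)} {A B : Finset α} {l : List α}
    (h : AWalk E A B l) : l ≠ [] := by
  rcases h.1 with ⟨a, _, ha⟩
  intro h'; simp [h'] at ha

lemma AWalk.mono {E E' : Finset (α × α)} {A B : Finset α} {l : List α}
    (h : AWalk E A B l) (hsub : E ⊆ E') : AWalk E' A B l :=
  ⟨h.1, h.2.1.imp (fun _ _ hx => hsub hx), h.2.2⟩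

lemma head?_of_prefix {l₁ l₂ : List α} (h : l₁ <+: l₂) (hne : l₁ ≠ []) :
    l₂.head? = l₁.head? := by
  rcases h with ⟨t, rfl⟩
  cases l₁ with
  | nil => exact absurd rfl hne
  | cons a l => rfl

lemma getLast?_of_suffix {l₁ l₂ : List α} (h : l₁ <:+ l₂) (hne : l₁ ≠ []) :
    l₂.getLast? = l₁.getLast? := by
  rcases h with ⟨t, rfl⟩
  exact List.getLast?_append_of_ne_nil _ hne

/-- Prefix of a list up to its first hit of `S`. -/
lemma exists_first_hit (S : Finset α) :
    ∀ l : List α, (∃ x ∈ S, x ∈ l) →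
      ∃ p c, (p ++ [c]) <+: l ∧ c ∈ S ∧ ∀ x ∈ p, x ∉ S := by
  intro l
  induction l with
  | nil => rintro ⟨x, _, hx⟩; simp at hx
  | cons a t ih =>
    intro h
    by_cases ha : a ∈ S
    · exact ⟨[], a, ⟨t, rfl⟩, ha, by simp⟩
    · have : ∃ x ∈ S, x ∈ t := by
        rcases h with ⟨x, hxS, hxl⟩
        rcases List.mem_cons.1 hxl with rfl | hxt
        · exact absurd hxS ha
        · exact ⟨x, hxS, hxt⟩
      rcases ih this with ⟨p, c, ⟨t', ht'⟩, hc, hp⟩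
      exact ⟨a :: p, c, ⟨t', by simp [ht']⟩, hc,
        by rintro x hx; rcases List.mem_cons.1 hx with rfl | hx; exact ha; exact hp x hx⟩

/-- Suffix of a list from its last hit of `S`. -/
lemma exists_last_hit (S : Finset α) (l : List α) (h : ∃ x ∈ S, x ∈ l) :
    ∃ c q, (c :: q) <:+ l ∧ c ∈ S ∧ ∀ x ∈ q, x ∉ S := by
  have h' : ∃ x ∈ S, x ∈ l.reverse := by simpa using h
  rcases exists_first_hit S l.reverse h' with ⟨p, c, hpre, hc, hp⟩
  refine ⟨c, p.reverse, ?_, hc, fun x hx => hp x (by simpa using hx)⟩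
  have h2 : (c :: p.reverse).reverse <+: l.reverse := by simpa using hpre
  exact (List.reverse_prefix (l₁ := c :: p.reverse) (l₂ := l)).1 h2

lemma chain'_restrict_first {P Q : α → α → Prop} :
    ∀ l : List α, l.Chain' P → (∀ a b, P a b → a ∈ l.dropLast → Q a b) → l.Chain' Q := by
  intro l
  induction l with
  | nil => intros; exact List.isChain_nil
  | cons a t ih =>
    cases t with
    | nil => intros; exact List.isChain_singleton a
    | cons b t' =>
      intro hP hmem
      rw [List.Chain', List.isChain_cons_cons] at hP ⊢
      have hd : (a :: b :: t').dropLast = a :: (b :: t').dropLast := by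
        simp [List.dropLast_cons_of_ne_nil]
      refine ⟨hmem a b hP.1 (by rw [hd]; exact List.mem_cons_self), ?_⟩
      exact ih hP.2 (fun x y hxy hx => hmem x y hxy (by rw [hd]; exact List.mem_cons_of_mem _ hx))

lemma chain'_restrict_second {P Q : α → α → Prop} :
    ∀ l : List α, l.Chain' P → (∀ a b, P a b → b ∈ l.tail → Q a b) → l.Chain' Q := by
  intro l
  induction l with
  | nil => intros; exact List.isChain_nil
  | cons a t ih =>
    cases t with
    | nil => intros; exact List.isChain_singleton a
    | cons b t' =>
      intro hP hmem
      rw [List.Chain', List.isChain_cons_cons] at hP ⊢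
      refine ⟨hmem a b hP.1 List.mem_cons_self, ?_⟩
      exact ih hP.2 (fun x y hxy hx => hmem x y hxy (List.mem_cons_of_mem _ hx))

lemma exists_bad_pair {P Q : α → α → Prop} :
    ∀ l : List α, l.Chain' P → ¬ l.Chain' Q →
      ∃ a b, a ∈ l ∧ b ∈ l ∧ P a b ∧ ¬ Q a b := by
  intro l
  induction l with
  | nil => intro _ h; exact absurd List.isChain_nil h
  | cons a t ih =>
    cases t with
    | nil => intro _ h; exact absurd (List.isChain_singleton a) h
    | cons b t' =>
      intro hP hQ
      rw [List.Chain', List.isChain_cons_cons] at hP hQ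
      by_cases hab : Q a b
      · have : ¬ (b :: t').Chain' Q := fun h => hQ ⟨hab, h⟩
        rcases ih hP.2 this with ⟨x, y, hx, hy, hPxy, hQxy⟩
        exact ⟨x, y, List.mem_cons_of_mem _ hx, List.mem_cons_of_mem _ hy, hPxy, hQxy⟩
      · exact ⟨a, b, List.mem_cons_self, List.mem_cons_of_mem _ List.mem_cons_self,
          hP.1, hab⟩

lemma prefix_snoc {l p : List α} {a c : α} (h : (l ++ [a]) <+: (p ++ [c])) :
    (l = p ∧ a = c) ∨ (l ++ [a]) <+: p := by
  have hlen : l.length + 1 ≤ p.length + 1 := by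
    have := h.length_le; simpa using this
  by_cases he : l.length = p.length
  · left
    have := List.prefix_iff_eq_take.1 h
    have hl : (l ++ [a]).length = (p ++ [c]).length := by simp [he]
    have heq : l ++ [a] = p ++ [c] := List.IsPrefix.eq_of_length h hl
    have := List.append_inj' heq rfl
    exact ⟨this.1, by simpa using this.2⟩
  · right
    have hlt : l.length + 1 ≤ p.length := by omega
    rcases h with ⟨t, ht⟩
    have : (l ++ [a]) <+: (p ++ [c]) := ⟨t, ht⟩
    -- take the first p.length elements
    have := List.prefix_take_iff.2 ⟨this, by simpa using hlt⟩
    rw [List.take_left' rfl] at this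
    exact this

/-- easy direction: a disjoint family of walks is no larger than any separator. -/
lemma family_le_sep (E : Finset (α × α)) (A B S : Finset α) (n : ℕ)
    (W : Fin n → List α) (hW : ∀ i, AWalk E A B (W i))
    (hdisj : ∀ i j, i ≠ j → ∀ x, x ∈ W i → x ∉ W j)
    (hS : ∀ l, AWalk E A B l → ∃ x ∈ S, x ∈ l) : n ≤ S.card := by
  have hex : ∀ i, ∃ x, x ∈ S ∧ x ∈ W i := by
    intro i; rcases hS (W i) (hW i) with ⟨x, hx, hxl⟩; exact ⟨x, hx, hxl⟩
  choose f hfS hfW using hex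
  have hinj : Function.Injective f := by
    intro i j hij
    by_contra hne
    exact hdisj i j hne (f i) (hfW i) (hij ▸ hfW j)
  calc n = (Finset.univ.image f).card := by
        rw [Finset.card_image_of_injective _ hinj]; simp
    _ ≤ S.card := Finset.card_le_card (by
        intro x hx; rcases Finset.mem_image.1 hx with ⟨i, _, rfl⟩; exact hfS i)

/-- base case: no edges. -/
lemma menger_empty (A B : Finset α) (k : ℕ)
    (h : ∀ S : Finset α, (∀ l, AWalk (∅ : Finset (α × α)) A B l → ∃ x ∈ S, x ∈ l) → k ≤ S.card) :
    ∃ W : Fin k → List α, (∀ i, AWalk (∅ : Finset (α × α)) A B (W i)) ∧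
      ∀ i j, i ≠ j → ∀ x, x ∈ W i → x ∉ W j := by
  have hsep : ∀ l, AWalk (∅ : Finset (α × α)) A B l → ∃ x ∈ A ∩ B, x ∈ l := by
    rintro l ⟨⟨a, haA, ha⟩, hch, ⟨b, hbB, hb⟩⟩
    match l, ha with
    | (x :: t), ha =>
      have hax : a = x := by simpa using ha.symm
      subst hax
      cases t with
      | nil =>
        have hab : a = b := by simpa using hb
        exact ⟨a, Finset.mem_inter.2 ⟨haA, hab ▸ hbB⟩, by simp⟩
      | cons y t' =>
        rw [List.Chain', List.isChain_cons_cons] at hch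
        simp at hch
  have hk : k ≤ (A ∩ B).card := h _ hsep
  obtain ⟨T, hTsub, hTcard⟩ := Finset.exists_subset_card_eq hk
  let e : Fin k ≃ {x // x ∈ T} := (T.equivFin.trans (finCongr hTcard)).symm
  refine ⟨fun i => [(e i : α)], ?_, ?_⟩
  · intro i
    have hmem : (e i : α) ∈ A ∩ B := hTsub (e i).2
    exact ⟨⟨_, (Finset.mem_inter.1 hmem).1, rfl⟩, List.isChain_singleton _,
      ⟨_, (Finset.mem_inter.1 hmem).2, rfl⟩⟩
  · intro i j hij x hxi hxj
    simp only [List.mem_singleton] at hxi hxj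
    exact hij (e.injective (Subtype.ext (hxi ▸ hxj ▸ rfl : (e i : α) = (e j : α))))

lemma suffix_cons {α : Type*} {l q : List α} {a c : α} (h : (a :: l) <:+ (c :: q)) :
    (a = c ∧ l = q) ∨ (a :: l) <:+ q := by
  rcases h with ⟨t, ht⟩
  cases t with
  | nil => left; simpa using ht
  | cons t₀ ts =>
    right
    rw [List.cons_append] at ht
    exact ⟨ts, (List.cons.injEq _ _ _ _ ▸ ht).2⟩

lemma mem_of_getLast?' {α : Type*} {l : List α} {a : α} (h : l.getLast? = some a) : a ∈ l := by
  cases l with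
  | nil => simp at h
  | cons x t =>
    have := List.getLast?_eq_getLast (l := x :: t) (by simp)
    rw [this] at h
    have h2 := List.getLast_mem (l := x :: t) (by simp)
    rwa [Option.some_inj.1 h] at h2
lemma mem_of_head?' {α : Type*} {l : List α} {a : α} (h : l.head? = some a) : a ∈ l := by
  cases l with
  | nil => simp at h
  | cons x t => simp at h; simp [h]

lemma menger_aux {α : Type*} [DecidableEq α] :
    ∀ (N : ℕ) (E : Finset (α × α)) (A B : Finset α) (k : ℕ),
    E.card ≤ N → (∀ a, (a, a) ∉ E) → (∀ S, ASep E A B S → k ≤ S.card) →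
    ∃ W : Fin k → List α, (∀ i, AWalk E A B (W i)) ∧
      ∀ i j, i ≠ j → ∀ x, x ∈ W i → x ∉ W j := by
  intro N
  induction N with
  | zero =>
    intro E A B k hcard hirr hsep
    have hE : E = ∅ := Finset.card_eq_zero.1 (Nat.le_zero.1 hcard)
    subst hE
    exact menger_empty A B k hsep
  | succ N ih =>
    intro E A B k hcard hirr hsep
    rcases E.eq_empty_or_nonempty with hE | hE
    · subst hE; exact menger_empty A B k hsep
    obtain ⟨e, he⟩ := hE
    obtain ⟨x, y⟩ := e
    have hxy : x ≠ y := fun h => hirr x (h ▸ he)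
    set E' : Finset (α × α) := E.erase (x, y) with hE'
    have hE'sub : E' ⊆ E := Finset.erase_subset _ _
    have hE'card : E'.card ≤ N := by
      have h1 : E'.card = E.card - 1 := Finset.card_erase_of_mem he
      have h2 : 0 < E.card := Finset.card_pos.2 ⟨_, he⟩
      omega
    have hirr' : ∀ a, (a, a) ∉ E' := fun a ha => hirr a (hE'sub ha)
    by_cases hc : ∀ S, ASep E' A B S → k ≤ S.card
    · obtain ⟨W, hW, hWd⟩ := ih E' A B k hE'card hirr' hc
      exact ⟨W, fun i => (hW i).mono hE'sub, hWd⟩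
    push_neg at hc
    obtain ⟨S, hSsep, hSlt⟩ := hc
    -- claim (a)
    have claim_x : ASep E A B (insert x S) := by
      intro l hl
      by_cases hch : l.Chain' (fun a b => (a, b) ∈ E')
      · obtain ⟨z, hzS, hzl⟩ := hSsep l ⟨hl.1, hch, hl.2.2⟩
        exact ⟨z, Finset.mem_insert_of_mem hzS, hzl⟩
      · obtain ⟨a, b, hal, hbl, hab, hab'⟩ := exists_bad_pair l hl.2.1 hch
        have : (a, b) = (x, y) := by
          by_contra hne
          exact hab' (Finset.mem_erase.2 ⟨hne, hab⟩)
        obtain ⟨rfl, rfl⟩ := Prod.mk.injEq _ _ _ _ ▸ this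
        exact ⟨a, Finset.mem_insert_self _ _, hal⟩
    have claim_y : ASep E A B (insert y S) := by
      intro l hl
      by_cases hch : l.Chain' (fun a b => (a, b) ∈ E')
      · obtain ⟨z, hzS, hzl⟩ := hSsep l ⟨hl.1, hch, hl.2.2⟩
        exact ⟨z, Finset.mem_insert_of_mem hzS, hzl⟩
      · obtain ⟨a, b, hal, hbl, hab, hab'⟩ := exists_bad_pair l hl.2.1 hch
        have : (a, b) = (x, y) := by
          by_contra hne
          exact hab' (Finset.mem_erase.2 ⟨hne, hab⟩)
        obtain ⟨rfl, rfl⟩ := Prod.mk.injEq _ _ _ _ ▸ this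
        exact ⟨b, Finset.mem_insert_self _ _, hbl⟩
    have hxS : x ∉ S := by
      intro hx
      have h1 : insert x S = S := Finset.insert_eq_self.2 hx
      have h2 := hsep _ claim_x
      rw [h1] at h2
      omega
    have hyS : y ∉ S := by
      intro hy
      have h1 : insert y S = S := Finset.insert_eq_self.2 hy
      have h2 := hsep _ claim_y
      rw [h1] at h2
      omega
    have hScard : S.card = k - 1 ∧ 1 ≤ k := by
      have h1 := hsep _ claim_x
      have h2 := Finset.card_insert_le x S
      omega
    have hSxcard : (insert x S).card = k := by
      rw [Finset.card_insert_of_notMem hxS]; omega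
    have hSycard : (insert y S).card = k := by
      rw [Finset.card_insert_of_notMem hyS]; omega
    -- claim (c): A–Sx separators in E' are big
    have hsepx : ∀ T, ASep E' A (insert x S) T → k ≤ T.card := by
      intro T hT
      refine hsep T ?_
      intro l hl
      obtain ⟨z, hz, hzl⟩ := claim_x l hl
      obtain ⟨p, c, hpre, hcS, hpS⟩ := exists_first_hit (insert x S) l ⟨z, hz, hzl⟩
      have hl1 : AWalk E' A (insert x S) (p ++ [c]) := by
        refine ⟨?_, ?_, ⟨c, hcS, List.getLast?_concat⟩⟩
        · obtain ⟨a, haA, ha⟩ := hl.1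
          exact ⟨a, haA, (head?_of_prefix hpre (by simp)) ▸ ha⟩
        · have hchain : (p ++ [c]).Chain' (fun a b => (a, b) ∈ E) := hl.2.1.prefix hpre
          refine chain'_restrict_first _ hchain ?_
          intro a b hab hamem
          rw [List.dropLast_concat] at hamem
          refine Finset.mem_erase.2 ⟨?_, hab⟩
          intro heq
          obtain ⟨rfl, rfl⟩ := Prod.mk.injEq _ _ _ _ ▸ heq
          exact hpS a hamem (Finset.mem_insert_self _ _)
      obtain ⟨w, hwT, hwl⟩ := hT _ hl1
      exact ⟨w, hwT, hpre.subset hwl⟩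
    -- claim (d): Sy–B separators in E' are big
    have hsepy : ∀ T, ASep E' (insert y S) B T → k ≤ T.card := by
      intro T hT
      refine hsep T ?_
      intro l hl
      obtain ⟨z, hz, hzl⟩ := claim_y l hl
      obtain ⟨c, q, hsuf, hcS, hqS⟩ := exists_last_hit (insert y S) l ⟨z, hz, hzl⟩
      have hl2 : AWalk E' (insert y S) B (c :: q) := by
        refine ⟨⟨c, hcS, rfl⟩, ?_, ?_⟩
        · have hchain : (c :: q).Chain' (fun a b => (a, b) ∈ E) := hl.2.1.suffix hsuf
          refine chain'_restrict_second _ hchain ?_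
          intro a b hab hbmem
          simp only [List.tail_cons] at hbmem
          refine Finset.mem_erase.2 ⟨?_, hab⟩
          intro heq
          obtain ⟨rfl, rfl⟩ := Prod.mk.injEq _ _ _ _ ▸ heq
          exact hqS b hbmem (Finset.mem_insert_self _ _)
        · obtain ⟨b, hbB, hb⟩ := hl.2.2
          exact ⟨b, hbB, (getLast?_of_suffix hsuf (by simp)) ▸ hb⟩
      obtain ⟨w, hwT, hwl⟩ := hT _ hl2
      exact ⟨w, hwT, hsuf.subset hwl⟩
    obtain ⟨P, hPwalk, hPdisj⟩ := ih E' A (insert x S) k hE'card hirr' hsepx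
    obtain ⟨Q, hQwalk, hQdisj⟩ := ih E' (insert y S) B k hE'card hirr' hsepy
    -- normalize P: truncate at first hit of insert x S
    have hPhit : ∀ i, ∃ z ∈ insert x S, z ∈ P i := by
      intro i
      obtain ⟨b, hbB, hb⟩ := (hPwalk i).2.2
      exact ⟨b, hbB, mem_of_getLast?' hb⟩
    choose p c hpre hcmem hpS using fun i => exists_first_hit (insert x S) (P i) (hPhit i)
    have hQhit : ∀ i, ∃ z ∈ insert y S, z ∈ Q i := by
      intro i
      obtain ⟨a, haA, ha⟩ := (hQwalk i).1
      exact ⟨a, haA, mem_of_head?' ha⟩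
    choose d q hsuf hdmem hqS using fun i => exists_last_hit (insert y S) (Q i) (hQhit i)
    have hP'walk : ∀ i, AWalk E' A (insert x S) (p i ++ [c i]) := by
      intro i
      refine ⟨?_, (hPwalk i).2.1.prefix (hpre i), ⟨c i, hcmem i, List.getLast?_concat⟩⟩
      obtain ⟨a, haA, ha⟩ := (hPwalk i).1
      exact ⟨a, haA, (head?_of_prefix (hpre i) (by simp)) ▸ ha⟩
    have hQ'walk : ∀ i, AWalk E' (insert y S) B (d i :: q i) := by
      intro i
      refine ⟨⟨d i, hdmem i, rfl⟩, (hQwalk i).2.1.suffix (hsuf i), ?_⟩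
      obtain ⟨b, hbB, hb⟩ := (hQwalk i).2.2
      exact ⟨b, hbB, (getLast?_of_suffix (hsuf i) (by simp)) ▸ hb⟩
    -- injectivity and images of the endpoint maps
    have hcinj : Function.Injective c := by
      intro i j hij
      by_contra hne
      refine hPdisj i j hne (c i) ((hpre i).subset (by simp)) ((hpre j).subset ?_)
      rw [hij]; simp
    have hdinj : Function.Injective d := by
      intro i j hij
      by_contra hne
      refine hQdisj i j hne (d i) ((hsuf i).subset (by simp)) ((hsuf j).subset ?_)
      rw [hij]; simp
    have hcim : Finset.image c Finset.univ = insert x S := by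
      refine Finset.eq_of_subset_of_card_le ?_ ?_
      · intro z hz
        obtain ⟨i, _, rfl⟩ := Finset.mem_image.1 hz
        exact hcmem i
      · rw [Finset.card_image_of_injective _ hcinj, hSxcard]
        simp
    have hdim : Finset.image d Finset.univ = insert y S := by
      refine Finset.eq_of_subset_of_card_le ?_ ?_
      · intro z hz
        obtain ⟨i, _, rfl⟩ := Finset.mem_image.1 hz
        exact hdmem i
      · rw [Finset.card_image_of_injective _ hdinj, hSycard]
        simp
    obtain ⟨i₀, -, hci₀⟩ := Finset.mem_image.1 (hcim ▸ Finset.mem_insert_self x S)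
    obtain ⟨j₀, -, hdj₀⟩ := Finset.mem_image.1 (hdim ▸ Finset.mem_insert_self y S)
    -- key disjointness lemma
    have key : ∀ i j u, u ∈ p i ++ [c i] → u ∈ d j :: q j → u = c i ∧ c i = d j := by
      intro i j u hui huj
      obtain ⟨p₁, c₁, hpre₁, hc₁, -⟩ :=
        exists_first_hit ({u} : Finset α) (p i ++ [c i]) ⟨u, Finset.mem_singleton_self u, hui⟩
      rw [Finset.mem_singleton.1 hc₁] at hpre₁
      obtain ⟨c₂, q₁, hsuf₁, hc₂, -⟩ :=
        exists_last_hit ({u} : Finset α) (d j :: q j) ⟨u, Finset.mem_singleton_self u, huj⟩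
      rw [Finset.mem_singleton.1 hc₂] at hsuf₁
      have hpreP : (p₁ ++ [u]) <+: P i := (hpre₁.trans (hpre i))
      have hsufQ : (u :: q₁) <:+ Q j := (hsuf₁.trans (hsuf j))
      have hg : AWalk E' A B (p₁ ++ (u :: q₁)) := by
        refine ⟨?_, ?_, ?_⟩
        · obtain ⟨a, haA, ha⟩ := (hPwalk i).1
          refine ⟨a, haA, ?_⟩
          have h1 : (p₁ ++ (u :: q₁)).head? = (p₁ ++ [u]).head? := by
            cases p₁ with
            | nil => simp
            | cons w t => simp
          rw [h1, ← head?_of_prefix hpreP (by simp)]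
          exact ha
        · have hassoc : p₁ ++ (u :: q₁) = (p₁ ++ [u]) ++ q₁ := by simp
          rw [hassoc]
          refine List.isChain_append.2 ⟨(hPwalk i).2.1.prefix hpreP, ?_, ?_⟩
          · exact ((hQwalk j).2.1.suffix hsufQ).tail
          · intro z hz w hw
            rw [List.getLast?_concat, Option.mem_def, Option.some_inj] at hz
            subst hz
            exact (List.isChain_cons.1 ((hQwalk j).2.1.suffix hsufQ)).1 w hw
        · obtain ⟨b, hbB, hb⟩ := (hQwalk j).2.2
          refine ⟨b, hbB, ?_⟩
          rw [List.getLast?_append_of_ne_nil _ (by simp : (u :: q₁) ≠ []),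
            ← getLast?_of_suffix hsufQ (by simp)]
          exact hb
      obtain ⟨z, hzS, hzg⟩ := hSsep _ hg
      have hzcases : z ∈ p₁ ∨ z = u ∨ z ∈ q₁ := by
        simpa using hzg
      rcases prefix_snoc hpre₁ with ⟨h1, h2⟩ | hpre₂
      · -- h2 : u = c i, h1 : p₁ = p i
        rcases suffix_cons hsuf₁ with ⟨hu2, -⟩ | hsuf₂
        · exact ⟨h2, h2 ▸ hu2⟩
        · exfalso
          have huq : u ∈ q j := hsuf₂.subset List.mem_cons_self
          rcases hzcases with hz | hzu | hz
          · exact hpS i z (h1 ▸ hz) (Finset.mem_insert_of_mem hzS)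
          · exact hqS j z (by rw [hzu]; exact huq) (Finset.mem_insert_of_mem hzS)
          · exact hqS j z (hsuf₂.subset (List.mem_cons_of_mem _ hz)) (Finset.mem_insert_of_mem hzS)
      · -- p₁ ++ [u] is a prefix of p i
        exfalso
        have hup : u ∈ p i := hpre₂.subset (by simp)
        have hp₁sub : ∀ w ∈ p₁, w ∈ p i := fun w hw => hpre₂.subset (by simp [hw])
        rcases hzcases with hz | hzu | hz
        · exact hpS i z (hp₁sub z hz) (Finset.mem_insert_of_mem hzS)
        · exact hpS i z (by rw [hzu]; exact hup) (Finset.mem_insert_of_mem hzS)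
        · rcases suffix_cons hsuf₁ with ⟨-, h3⟩ | hsuf₂
          · exact hqS j z (h3 ▸ hz) (Finset.mem_insert_of_mem hzS)
          · exact hqS j z (hsuf₂.subset (List.mem_cons_of_mem _ hz)) (Finset.mem_insert_of_mem hzS)
    -- the matching σ
    have hcS : ∀ i, i ≠ i₀ → c i ∈ S := by
      intro i hne
      rcases Finset.mem_insert.1 (hcmem i) with h | h
      · exact absurd (hcinj (h.trans hci₀.symm)) hne
      · exact h
    have htar : ∀ i, (if i = i₀ then y else c i) ∈ insert y S := by
      intro i
      split
      · exact Finset.mem_insert_self _ _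
      · next h => exact Finset.mem_insert_of_mem (hcS i h)
    have hσ : ∀ i, ∃ j, d j = (if i = i₀ then y else c i) := by
      intro i
      obtain ⟨j, -, hj⟩ := Finset.mem_image.1 (hdim ▸ htar i)
      exact ⟨j, hj⟩
    choose σ hσd using hσ
    have htarinj : Function.Injective (fun i => if i = i₀ then y else c i) := by
      intro i j hij
      simp only at hij
      by_cases hi : i = i₀ <;> by_cases hj : j = i₀
      · rw [hi, hj]
      · rw [if_pos hi, if_neg hj] at hij
        exact absurd (hcS j hj) (hij ▸ hyS)
      · rw [if_neg hi, if_pos hj] at hij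
        exact absurd (hcS i hi) (hij.symm ▸ hyS)
      · rw [if_neg hi, if_neg hj] at hij
        exact hcinj hij
    have hσinj : Function.Injective σ := by
      intro i j hij
      refine htarinj ?_
      simp only
      rw [← hσd i, ← hσd j, hij]
    have hσi₀ : σ i₀ = j₀ := by
      refine hdinj ?_
      rw [hσd i₀, if_pos rfl, hdj₀]
    have hdσ : ∀ i, i ≠ i₀ → d (σ i) = c i := by
      intro i hne
      rw [hσd i, if_neg hne]
    -- assemble the final walks
    refine ⟨fun i => (p i ++ [c i]) ++ (if i = i₀ then d j₀ :: q j₀ else q (σ i)), ?_, ?_⟩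
    · intro i
      show AWalk E A B ((p i ++ [c i]) ++ (if i = i₀ then d j₀ :: q j₀ else q (σ i)))
      refine ⟨?_, ?_, ?_⟩
      · obtain ⟨a, haA, ha⟩ := (hP'walk i).1
        refine ⟨a, haA, ?_⟩
        rw [List.head?_append_of_ne_nil _ (by simp : p i ++ [c i] ≠ [])]
        exact ha
      · refine List.isChain_append.2 ⟨(hP'walk i).2.1.imp (fun a b h => hE'sub h), ?_, ?_⟩
        · split
          · exact (hQ'walk j₀).2.1.imp (fun a b h => hE'sub h)
          · exact ((hQ'walk _).2.1.tail).imp (fun a b h => hE'sub h)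
        · intro z hz w hw
          rw [List.getLast?_concat, Option.mem_def, Option.some_inj] at hz
          subst hz
          by_cases hi : i = i₀
          · rw [if_pos hi] at hw
            rw [List.head?_cons, Option.mem_def, Option.some_inj] at hw
            subst hw
            rw [hi, hci₀, hdj₀]
            exact he
          · rw [if_neg hi] at hw
            have := (List.isChain_cons.1 (hQ'walk (σ i)).2.1).1 w hw
            rw [hdσ i hi] at this
            exact hE'sub this
      · by_cases hi : i = i₀
        · rw [if_pos hi]
          obtain ⟨b, hbB, hb⟩ := (hQ'walk j₀).2.2
          refine ⟨b, hbB, ?_⟩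
          rw [List.getLast?_append_of_ne_nil _ (by simp : d j₀ :: q j₀ ≠ [])]
          exact hb
        · rw [if_neg hi]
          obtain ⟨b, hbB, hb⟩ := (hQ'walk (σ i)).2.2
          rcases List.eq_nil_or_concat (q (σ i)) with hq0 | ⟨t, a, hta⟩
          · obtain rfl : d (σ i) = b := by
              rw [hq0] at hb; simpa using hb
            refine ⟨d (σ i), hbB, ?_⟩
            rw [hq0]
            simp [hdσ i hi, List.getLast?_concat]
          · have hqne : q (σ i) ≠ [] := by rw [hta]; simp
            refine ⟨b, hbB, ?_⟩
            rw [List.getLast?_append_of_ne_nil _ hqne]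
            rw [show d (σ i) :: q (σ i) = [d (σ i)] ++ q (σ i) by simp,
              List.getLast?_append_of_ne_nil _ hqne] at hb
            exact hb
    · -- pairwise disjointness
      intro i j hne u hui huj
      replace hui : u ∈ (p i ++ [c i]) ++ (if i = i₀ then d j₀ :: q j₀ else q (σ i)) := hui
      replace huj : u ∈ (p j ++ [c j]) ++ (if j = i₀ then d j₀ :: q j₀ else q (σ j)) := huj
      have hmemP : ∀ a z, z ∈ p a ++ [c a] → z ∈ P a := fun a z hz => (hpre a).subset hz
      have hmemQ : ∀ a z, z ∈ d a :: q a → z ∈ Q a := fun a z hz => (hsuf a).subset hz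
      have htl : ∀ a z, z ∈ (if a = i₀ then d j₀ :: q j₀ else q (σ a)) →
          z ∈ d (σ a) :: q (σ a) := by
        intro a z hz
        by_cases ha : a = i₀
        · rw [if_pos ha] at hz
          rw [ha, hσi₀]
          exact hz
        · rw [if_neg ha] at hz
          exact List.mem_cons_of_mem _ hz
      have hPQ : ∀ a b u, u ∈ p a ++ [c a] → u ∈ d (σ b) :: q (σ b) → a = b := by
        intro a b u hu1 hu2
        obtain ⟨-, hcd⟩ := key a (σ b) u hu1 hu2
        by_cases hb : b = i₀
        · exfalso
          rw [hb, hσi₀, hdj₀] at hcd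
          rcases Finset.mem_insert.1 (hcmem a) with h | h
          · exact hxy (h.symm.trans hcd)
          · exact hyS (hcd ▸ h)
        · exact hcinj (hcd.trans (hdσ b hb))
      rcases List.mem_append.1 hui with hui | hui <;> rcases List.mem_append.1 huj with huj | huj
      · exact hPdisj i j hne u (hmemP i u hui) (hmemP j u huj)
      · exact hne (hPQ i j u hui (htl j u huj))
      · exact hne (hPQ j i u huj (htl i u hui)).symm
      · exact hQdisj (σ i) (σ j) (fun h => hne (hσinj h)) u
          (hmemQ (σ i) u (htl i u hui)) (hmemQ (σ j) u (htl j u huj))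


lemma strictMono_fin_nat {n : ℕ} {f : Fin n → ℕ}
    (h : ∀ (i : ℕ) (hi : i + 1 < n), f ⟨i, Nat.lt_of_succ_lt hi⟩ < f ⟨i + 1, hi⟩) :
    StrictMono f := by
  rintro ⟨av, ha⟩ ⟨bv, hb⟩ hab
  rw [Fin.lt_def] at hab
  simp only at hab
  induction bv with
  | zero => omega
  | succ m ihm =>
    rcases Nat.lt_or_ge av m with hlt | hge
    · exact lt_trans (ihm (by omega) hlt) (h m hb)
    · have : av = m := by omega
      subst this
      exact h av hb

lemma menger_abstract {α : Type*} [DecidableEq α] (E : Finset (α × α)) (A B : Finset α)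
    (hirr : ∀ a, (a, a) ∉ E) :
    ∃ M : ℕ,
      IsGreatest {n | ∃ W : Fin n → List α, (∀ i, AWalk E A B (W i)) ∧
        ∀ i j, i ≠ j → ∀ x, x ∈ W i → x ∉ W j} M ∧
      IsLeast {n | ∃ S, ASep E A B S ∧ S.card = n} M := by
  have hA : ASep E A B A := by
    intro l hl
    obtain ⟨a, haA, ha⟩ := hl.1
    exact ⟨a, haA, mem_of_head?' ha⟩
  have hne : {n | ∃ S, ASep E A B S ∧ S.card = n}.Nonempty := ⟨A.card, A, hA, rfl⟩
  set M := sInf {n | ∃ S, ASep E A B S ∧ S.card = n} with hM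
  obtain ⟨S₀, hS₀, hS₀card⟩ := Nat.sInf_mem hne
  refine ⟨M, ⟨?_, ?_⟩, ⟨⟨S₀, hS₀, hS₀card⟩, fun n hn => Nat.sInf_le hn⟩⟩
  · exact menger_aux E.card E A B M le_rfl hirr
      (fun S hS => Nat.sInf_le (⟨S, hS, rfl⟩ : _ ∈ {n | ∃ S, ASep E A B S ∧ S.card = n}))
  · rintro n ⟨W, hW, hdisj⟩
    rw [hM, ← hS₀card]
    exact family_le_sep E A B S₀ n W hW hdisj hS₀

end Abstract

lemma head?_eq_get {β : Type*} (l : List β) (h : l ≠ []) :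
    l.head? = some (l.get ⟨0, List.length_pos_iff.2 h⟩) := by
  cases l with
  | nil => exact absurd rfl h
  | cons a t => rfl

lemma getLast?_eq_get {β : Type*} (l : List β) (h : l ≠ []) :
    l.getLast? = some (l.get ⟨l.length - 1, by have := List.length_pos_iff.2 h; omega⟩) := by
  rw [List.getLast?_eq_getLast h, List.getLast_eq_getElem]; rfl

/-- A journey (time-respecting path) in a temporal digraph with edge relation `E`
and labeling `lab`, from `s` to `v`: a walk along edges of the digraph together
with a strictly increasing sequence of labels, each chosen from the label set of
the corresponding edge. -/
structure Journey {V : Type*} (E : V → V → Prop) (lab : V → V → Finset ℕ)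
    (s v : V) where
  len : ℕ
  vert : Fin (len + 1) → V
  lbl : Fin len → ℕ
  first : vert 0 = s
  last : vert (Fin.last len) = v
  edge : ∀ i : Fin len, E (vert i.castSucc) (vert i.succ)
  mem : ∀ i : Fin len, lbl i ∈ lab (vert i.castSucc) (vert i.succ)
  mono : StrictMono lbl

/-- Two journeys are out-disjoint if they never leave the same node at the same time. -/
def OutDisjoint {V : Type*} {E : V → V → Prop} {lab : V → V → Finset ℕ}
    {s₁ v₁ s₂ v₂ : V} (J : Journey E lab s₁ v₁) (J' : Journey E lab s₂ v₂) : Prop :=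
  ∀ (i : Fin J.len) (j : Fin J'.len),
    J.vert i.castSucc = J'.vert j.castSucc → J.lbl i ≠ J'.lbl j

/-- The labeling obtained by removing the node departure times in `D`:
for `(u, t) ∈ D`, the label `t` is deleted from all edges leaving `u`. -/
def removeDepartures {V : Type*} [DecidableEq V] (lab : V → V → Finset ℕ)
    (D : Finset (V × ℕ)) : V → V → Finset ℕ :=
  fun u w => (lab u w).filter (fun t => (u, t) ∉ D)

/-- Menger's temporal analogue (out-disjoint version): the maximum number of pairwise
out-disjoint journeys from `s` to `v` equals the minimum number of node departure
times whose removal leaves no journey from `s` to `v`. -/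
theorem menger_temporal_out_disjoint {V : Type*} [Fintype V] [DecidableEq V]
    (E : V → V → Prop) (lab : V → V → Finset ℕ) (s v : V) (hsv : s ≠ v) :
    ∃ M : ℕ,
      IsGreatest {n | ∃ J : Fin n → Journey E lab s v,
        ∀ i j, i ≠ j → OutDisjoint (J i) (J j)} M ∧
      IsLeast {n | ∃ D : Finset (V × ℕ), D.card = n ∧
        IsEmpty (Journey E (removeDepartures lab D) s v)} M := by
  classical
  set L : Finset ℕ := Finset.univ.sup (fun u : V => Finset.univ.sup (fun w : V => lab u w))
    with hLdef
  have hL : ∀ u w t, t ∈ lab u w → t ∈ L := by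
    intro u w t ht
    have h1 : lab u w ≤ Finset.univ.sup (fun w : V => lab u w) :=
      Finset.le_sup (Finset.mem_univ w)
    have h2 : Finset.univ.sup (fun w : V => lab u w) ≤ L :=
      Finset.le_sup (f := fun u : V => Finset.univ.sup (fun w : V => lab u w))
        (Finset.mem_univ u)
    exact h2 (h1 ht)
  set Tok : Finset (V × ℕ) := Finset.univ ×ˢ L with hTokdef
  set Etok : Finset ((V × ℕ) × (V × ℕ)) :=
    (Tok ×ˢ Tok).filter
      (fun pr => E pr.1.1 pr.2.1 ∧ pr.1.2 ∈ lab pr.1.1 pr.2.1 ∧ pr.1.2 < pr.2.2) with hEtokdef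
  set At : Finset (V × ℕ) := ({s} : Finset V) ×ˢ L with hAtdef
  set Bt : Finset (V × ℕ) := Tok.filter (fun pr => E pr.1 v ∧ pr.2 ∈ lab pr.1 v) with hBtdef
  have hTokmem : ∀ (u : V) (t : ℕ), t ∈ L → (u, t) ∈ Tok := by
    intro u t ht
    rw [hTokdef, Finset.mem_product]
    exact ⟨Finset.mem_univ _, ht⟩
  have hirr : ∀ a : V × ℕ, (a, a) ∉ Etok := by
    intro a ha
    rw [hEtokdef, Finset.mem_filter] at ha
    exact absurd ha.2.2.2 (lt_irrefl _)
  -- Bridge: journey to walk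
  have jwalk : ∀ J : Journey E lab s v, ∃ l : List (V × ℕ), AWalk Etok At Bt l ∧
      (∀ z : V × ℕ, z ∈ l ↔ ∃ i : Fin J.len, (J.vert i.castSucc, J.lbl i) = z) := by
    intro J
    have hlen : 0 < J.len := by
      rcases Nat.eq_zero_or_pos J.len with h0 | h
      · exfalso
        apply hsv
        have hv : J.vert 0 = J.vert (Fin.last J.len) := by
          congr 1
          rw [Fin.ext_iff]
          simp [h0]
        exact (J.first.symm.trans hv).trans J.last
      · exact h
    set tok : Fin J.len → V × ℕ := fun i => (J.vert i.castSucc, J.lbl i) with htokdef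
    have htokTok : ∀ i, tok i ∈ Tok := fun i => hTokmem _ _ (hL _ _ _ (J.mem i))
    have hAt0 : ∀ i : Fin J.len, (i : ℕ) = 0 → tok i ∈ At := by
      intro i hi
      rw [hAtdef, Finset.mem_product]
      constructor
      · rw [Finset.mem_singleton]
        show J.vert i.castSucc = s
        rw [show i.castSucc = (0 : Fin (J.len + 1)) by rw [Fin.ext_iff]; simpa using hi]
        exact J.first
      · exact hL _ _ _ (J.mem i)
    have hBtlast : ∀ i : Fin J.len, (i : ℕ) = J.len - 1 → tok i ∈ Bt := by
      intro i hi
      have hsucc : i.succ = Fin.last J.len := by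
        rw [Fin.ext_iff]
        simp [hi]
        omega
      rw [hBtdef, Finset.mem_filter]
      refine ⟨htokTok i, ?_, ?_⟩
      · show E (J.vert i.castSucc) v
        have h3 := J.edge i
        rw [hsucc, J.last] at h3
        exact h3
      · show J.lbl i ∈ lab (J.vert i.castSucc) v
        have h3 := J.mem i
        rw [hsucc, J.last] at h3
        exact h3
    have hstep : ∀ a b : Fin J.len, (b : ℕ) = (a : ℕ) + 1 → (tok a, tok b) ∈ Etok := by
      intro a b hab
      have hcs : b.castSucc = a.succ := by
        rw [Fin.ext_iff]
        simp [hab]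
      rw [hEtokdef, Finset.mem_filter]
      refine ⟨Finset.mem_product.2 ⟨htokTok a, htokTok b⟩, ?_, ?_, ?_⟩
      · show E (J.vert a.castSucc) (J.vert b.castSucc)
        rw [hcs]
        exact J.edge a
      · show J.lbl a ∈ lab (J.vert a.castSucc) (J.vert b.castSucc)
        rw [hcs]
        exact J.mem a
      · exact J.mono (by rw [Fin.lt_def]; omega)
    have hne : List.ofFn tok ≠ [] := by
      simp only [ne_eq, List.ofFn_eq_nil_iff]
      omega
    refine ⟨List.ofFn tok, ⟨?_, ?_, ?_⟩, ?_⟩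
    · refine ⟨_, ?_, head?_eq_get _ hne⟩
      rw [List.get_ofFn]
      exact hAt0 _ (by simp)
    · rw [List.Chain', List.isChain_iff_getElem]
      intro i hi
      rw [List.getElem_ofFn, List.getElem_ofFn]
      exact hstep _ _ (by simp)
    · refine ⟨_, ?_, getLast?_eq_get _ hne⟩
      rw [List.get_ofFn]
      exact hBtlast _ (by simp)
    · intro z
      rw [List.mem_ofFn]
  -- Bridge: walk to journey
  have wjourney : ∀ l : List (V × ℕ), AWalk Etok At Bt l →
      ∃ J : Journey E lab s v, ∀ i : Fin J.len, (J.vert i.castSucc, J.lbl i) ∈ l := by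
    intro l hl
    have hne : l ≠ [] := hl.ne_nil
    have hpos : 0 < l.length := List.length_pos_iff.2 hne
    obtain ⟨a, haA, ha⟩ := hl.1
    obtain ⟨b, hbB, hb⟩ := hl.2.2
    have hchain := hl.2.1
    rw [List.Chain', List.isChain_iff_getElem] at hchain
    have hget0 : l.get ⟨0, hpos⟩ = a := by
      rw [head?_eq_get _ hne] at ha
      exact Option.some_inj.1 ha
    have hgetlast : l.get ⟨l.length - 1, by omega⟩ = b := by
      rw [getLast?_eq_get _ hne] at hb
      exact Option.some_inj.1 hb
    have has : a.1 = s := by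
      rw [hAtdef, Finset.mem_product, Finset.mem_singleton] at haA
      exact haA.1
    rw [hBtdef, Finset.mem_filter] at hbB
    have hEtokmem : ∀ (i : ℕ) (hi : i < l.length - 1),
        E (l.get ⟨i, by omega⟩).1 (l.get ⟨i + 1, by omega⟩).1 ∧
        (l.get ⟨i, by omega⟩).2 ∈ lab (l.get ⟨i, by omega⟩).1 (l.get ⟨i + 1, by omega⟩).1 ∧
        (l.get ⟨i, by omega⟩).2 < (l.get ⟨i + 1, by omega⟩).2 := by
      intro i hi
      have := hchain i (by omega)
      rw [hEtokdef, Finset.mem_filter] at this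
      exact this.2
    refine ⟨⟨l.length,
      fun i => if h : (i : ℕ) < l.length then (l.get ⟨i, h⟩).1 else v,
      fun i => (l.get ⟨(i : ℕ), i.isLt⟩).2, ?_, ?_, ?_, ?_, ?_⟩, ?_⟩
    · beta_reduce
      rw [dif_pos (show ((0 : Fin (l.length + 1)) : ℕ) < l.length from hpos)]
      show (l.get ⟨0, hpos⟩).1 = s
      rw [hget0]
      exact has
    · beta_reduce
      rw [dif_neg]
      simp
    · intro i
      beta_reduce
      by_cases hi1 : (i : ℕ) + 1 < l.length
      · rw [dif_pos (by simpa using i.isLt), dif_pos (by simpa using hi1)]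
        have := (hEtokmem i (by omega)).1
        convert this using 2 <;> simp
      · have hieq : (i : ℕ) = l.length - 1 := by have := i.isLt; omega
        rw [dif_pos (show ((i.castSucc : Fin (l.length + 1)) : ℕ) < l.length by
          simpa using i.isLt), dif_neg (by simp; omega)]
        have hidx : (⟨(i : ℕ), i.isLt⟩ : Fin l.length) = ⟨l.length - 1, by omega⟩ := by
          apply Fin.ext; simpa using hieq
        have hgb : l.get ⟨(i : ℕ), i.isLt⟩ = b := by rw [hidx]; exact hgetlast
        show E (l.get ⟨(i : ℕ), i.isLt⟩).1 v
        rw [hgb]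
        exact hbB.2.1
    · intro i
      beta_reduce
      by_cases hi1 : (i : ℕ) + 1 < l.length
      · rw [dif_pos (by simpa using i.isLt), dif_pos (by simpa using hi1)]
        have := (hEtokmem i (by omega)).2.1
        convert this using 2 <;> simp
      · have hieq : (i : ℕ) = l.length - 1 := by have := i.isLt; omega
        rw [dif_pos (show ((i.castSucc : Fin (l.length + 1)) : ℕ) < l.length by
          simpa using i.isLt), dif_neg (by simp; omega)]
        have hidx : (⟨(i : ℕ), i.isLt⟩ : Fin l.length) = ⟨l.length - 1, by omega⟩ := by
          apply Fin.ext; simpa using hieq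
        have hgb : l.get ⟨(i : ℕ), i.isLt⟩ = b := by rw [hidx]; exact hgetlast
        show (l.get ⟨(i : ℕ), i.isLt⟩).2 ∈ lab (l.get ⟨(i : ℕ), i.isLt⟩).1 v
        rw [hgb]
        exact hbB.2.2
    · refine strictMono_fin_nat ?_
      intro i hi
      exact (hEtokmem i (by omega)).2.2
    · intro i
      show ((if h : ((i.castSucc : Fin (l.length + 1)) : ℕ) < l.length then
          (l.get ⟨((i.castSucc : Fin (l.length + 1)) : ℕ), h⟩).1 else v),
        (l.get ⟨(i : ℕ), i.isLt⟩).2) ∈ l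
      rw [dif_pos (show ((i.castSucc : Fin (l.length + 1)) : ℕ) < l.length by
        simpa using i.isLt)]
      show ((l.get ⟨(i : ℕ), i.isLt⟩).1, (l.get ⟨(i : ℕ), i.isLt⟩).2) ∈ l
      rw [Prod.mk.eta]
      exact l.get_mem _
  -- Apply the abstract theorem
  obtain ⟨M, hG, hLst⟩ := menger_abstract Etok At Bt hirr
  refine ⟨M, ⟨?_, ?_⟩, ⟨?_, ?_⟩⟩
  · -- max family of out-disjoint journeys achieves M
    obtain ⟨W, hW, hdisj⟩ := hG.1
    refine ⟨fun i => (wjourney (W i) (hW i)).choose, ?_⟩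
    intro i j hne
    intro a c hvert hlbl
    have hti := (wjourney (W i) (hW i)).choose_spec a
    have htj := (wjourney (W j) (hW j)).choose_spec c
    have heq : ((wjourney (W i) (hW i)).choose.vert a.castSucc,
        (wjourney (W i) (hW i)).choose.lbl a) = ((wjourney (W j) (hW j)).choose.vert c.castSucc,
        (wjourney (W j) (hW j)).choose.lbl c) := by
      rw [hvert, hlbl]
    exact hdisj i j hne _ hti (heq ▸ htj)
  · -- any out-disjoint family has size ≤ M
    rintro n ⟨J, hJ⟩
    refine hG.2 ⟨fun i => (jwalk (J i)).choose, fun i => (jwalk (J i)).choose_spec.1, ?_⟩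
    intro i j hne z hz1 hz2
    obtain ⟨a, hta⟩ := ((jwalk (J i)).choose_spec.2 z).1 hz1
    obtain ⟨c, hc⟩ := ((jwalk (J j)).choose_spec.2 z).1 hz2
    have hveq : (J i).vert a.castSucc = (J j).vert c.castSucc := by
      have := hta.trans hc.symm
      exact congrArg Prod.fst this
    have hleq : (J i).lbl a = (J j).lbl c := by
      have := hta.trans hc.symm
      exact congrArg Prod.snd this
    exact hJ i j hne a c hveq hleq
  · -- a minimum cut of size M exists
    obtain ⟨S₀, hS₀sep, hS₀card⟩ := hLst.1
    refine ⟨S₀, hS₀card, ⟨?_⟩⟩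
    intro J'
    have hfree : ∀ i : Fin J'.len, (J'.vert i.castSucc, J'.lbl i) ∉ S₀ := by
      intro i
      have := J'.mem i
      rw [removeDepartures, Finset.mem_filter] at this
      exact this.2
    set J : Journey E lab s v :=
      ⟨J'.len, J'.vert, J'.lbl, J'.first, J'.last, J'.edge,
        fun i => (Finset.mem_filter.1 (J'.mem i)).1, J'.mono⟩ with hJdef
    obtain ⟨l, hlw, hltok⟩ := jwalk J
    obtain ⟨z, hzS, hzl⟩ := hS₀sep l hlw
    obtain ⟨i, hi⟩ := (hltok z).1 hzl
    exact hfree i (hi ▸ hzS)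
  · -- every cut has size ≥ M
    rintro n ⟨D, hDcard, hDempty⟩
    refine hLst.2 ⟨D, ?_, hDcard⟩
    intro l hlw
    by_contra hno
    push_neg at hno
    obtain ⟨J, htoks⟩ := wjourney l hlw
    refine hDempty.false ⟨J.len, J.vert, J.lbl, J.first, J.last, J.edge, ?_, J.mono⟩
    intro i
    rw [removeDepartures, Finset.mem_filter]
    exact ⟨J.mem i, fun hmem => hno _ hmem (htoks i)⟩
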